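/- Suppose φ is an efficient, strategy-proof, non-bossy, and normalized-cone-continuous rule on three agents and three objects. Let u be a profile where agents i ≠ j have the same induced strict order with u_i(a) > u_i(b) > u_i(c), and suppose φ_{ib}(u) + φ_{jb}(u) > 0. Then for all no-ties utilities u_i', u_j' inducing the same strict order as u_i, the profile u' = (u_i', u_j', u_k) with k the third agent satisfies φ(u') = φ(u). -/

import Mathlib

open Finset Filter Topology

/-- No ties on degenerate lotteries. -/
def NoTies (u : Fin 3 → ℝ) : Prop := ∀ x y : Fin 3, x ≠ y → u x ≠ u y

/-- A lottery over three objects. -/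
def IsLottery (π : Fin 3 → ℝ) : Prop := (∀ x, 0 ≤ π x) ∧ ∑ x, π x = 1

/-- A 3×3 bistochastic matrix (rows = agents, columns = objects). -/
def Bistochastic (π : Fin 3 → Fin 3 → ℝ) : Prop :=
  (∀ i x, 0 ≤ π i x) ∧ (∀ i, ∑ x, π i x = 1) ∧ (∀ x, ∑ i, π i x = 1)

/-- Expected utility of lottery `π` under Bernoulli utility `u`. -/
def EU (u π : Fin 3 → ℝ) : ℝ := ∑ x, u x * π x

/-- `u` and `v` induce the same strict order on objects. -/
def SameOrder (u v : Fin 3 → ℝ) : Prop := ∀ x y : Fin 3, u x > u y ↔ v x > v y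

def NoTiesProfile (u : Fin 3 → Fin 3 → ℝ) : Prop := ∀ i, NoTies (u i)

/-- Utilities normalized to sum to one. -/
def Normalized (u : Fin 3 → ℝ) : Prop := ∑ x, u x = 1

/-- Rate of middle substitution, for `u a > u b > u c`. -/
noncomputable def mu (u : Fin 3 → ℝ) (a b c : Fin 3) : ℝ := (u b - u c) / (u a - u c)

/-- Effectively the same: same strict order and same rate of middle substitution. -/
def EffSame (u v : Fin 3 → ℝ) : Prop :=
  SameOrder u v ∧ ∀ a b c : Fin 3, u a > u b → u b > u c → mu u a b c = mu v a b c

/-- The rule maps (no-ties) profiles to bistochastic matrices. -/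
def BistochasticValued (φ : (Fin 3 → Fin 3 → ℝ) → Fin 3 → Fin 3 → ℝ) : Prop :=
  ∀ u, NoTiesProfile u → Bistochastic (φ u)

def StrategyProof (φ : (Fin 3 → Fin 3 → ℝ) → Fin 3 → Fin 3 → ℝ) : Prop :=
  ∀ u i ui', NoTiesProfile u → NoTies ui' →
    EU (u i) (φ u i) ≥ EU (u i) (φ (Function.update u i ui') i)

def NonBossy (φ : (Fin 3 → Fin 3 → ℝ) → Fin 3 → Fin 3 → ℝ) : Prop :=
  ∀ u i ui', NoTiesProfile u → NoTies ui' →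
    φ u i = φ (Function.update u i ui') i → φ u = φ (Function.update u i ui')

/-- `π'` Pareto-dominates `π` at `u` in expected utility. -/
def Dominates (u π' π : Fin 3 → Fin 3 → ℝ) : Prop :=
  (∀ j, EU (u j) (π' j) ≥ EU (u j) (π j)) ∧ ∃ i, EU (u i) (π' i) > EU (u i) (π i)

def Efficient (φ : (Fin 3 → Fin 3 → ℝ) → Fin 3 → Fin 3 → ℝ) : Prop :=
  ∀ u, NoTiesProfile u → ¬ ∃ π', Bistochastic π' ∧ Dominates u π' (φ u)

/-- Normalized-cone-continuity. -/
def NCContinuous (φ : (Fin 3 → Fin 3 → ℝ) → Fin 3 → Fin 3 → ℝ) : Prop :=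
  ∀ (u : Fin 3 → Fin 3 → ℝ) (i : Fin 3) (us : ℕ → Fin 3 → ℝ),
    NoTiesProfile u → Normalized (u i) →
    (∀ k, NoTies (us k) ∧ Normalized (us k)) →
    Tendsto us atTop (nhds (u i)) →
    Tendsto (fun k => φ (Function.update u i (us k))) atTop (nhds (φ u))

namespace Stmt9

private lemma exhaust3' : ∀ a b c x : Fin 3, a ≠ b → a ≠ c → b ≠ c → (x = a ∨ x = b ∨ x = c) := by
  decide

private lemma third' : ∀ l h : Fin 3, l ≠ h → ∃ k, k ≠ l ∧ k ≠ h := by decide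

variable {a b c : Fin 3}

lemma exhaust3 (hab : a ≠ b) (hac : a ≠ c) (hbc : b ≠ c) (x : Fin 3) :
    x = a ∨ x = b ∨ x = c := exhaust3' a b c x hab hac hbc

lemma univ_eq (hab : a ≠ b) (hac : a ≠ c) (hbc : b ≠ c) :
    (univ : Finset (Fin 3)) = {a, b, c} := by
  ext x
  simpa using exhaust3 hab hac hbc x

lemma sum_three (hab : a ≠ b) (hac : a ≠ c) (hbc : b ≠ c) (f : Fin 3 → ℝ) :
    ∑ x, f x = f a + f b + f c := by
  rw [univ_eq hab hac hbc, Finset.sum_insert (by simp [hab, hac]),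
    Finset.sum_insert (by simp [hbc]), Finset.sum_singleton]
  ring

lemma funext3 (hab : a ≠ b) (hac : a ≠ c) (hbc : b ≠ c) {f g : Fin 3 → ℝ}
    (h1 : f a = g a) (h2 : f b = g b) (h3 : f c = g c) : f = g := by
  funext x
  rcases exhaust3 hab hac hbc x with rfl | rfl | rfl <;> assumption

/-- The normalized path utility with rate of middle substitution `s`. -/
noncomputable def W (a b c : Fin 3) (s : ℝ) : Fin 3 → ℝ :=
  fun x => if x = a then 1 - s/3 else if x = b then 2*s/3 else -(s/3)

lemma W_a (s : ℝ) : W a b c s a = 1 - s/3 := by simp [W]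

lemma W_b (hab : a ≠ b) (s : ℝ) : W a b c s b = 2*s/3 := by simp [W, Ne.symm hab]

lemma W_c (hac : a ≠ c) (hbc : b ≠ c) (s : ℝ) : W a b c s c = -(s/3) := by
  simp [W, Ne.symm hac, Ne.symm hbc]

lemma W_cone (hab : a ≠ b) (hac : a ≠ c) (hbc : b ≠ c) {s : ℝ} (hs0 : 0 < s) (hs1 : s < 1) :
    W a b c s a > W a b c s b ∧ W a b c s b > W a b c s c := by
  rw [W_a, W_b hab, W_c hac hbc]
  constructor <;> linarith

lemma W_noTies (hab : a ≠ b) (hac : a ≠ c) (hbc : b ≠ c) {s : ℝ}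
    (hs0 : 0 < s) (hs1 : s < 1) : NoTies (W a b c s) := by
  have va : W a b c s a = 1 - s/3 := W_a s
  have vb : W a b c s b = 2*s/3 := W_b hab s
  have vc : W a b c s c = -(s/3) := W_c hac hbc s
  intro x y hxy
  rcases exhaust3 hab hac hbc x with rfl | rfl | rfl <;>
    rcases exhaust3 hab hac hbc y with rfl | rfl | rfl <;>
      first
        | exact absurd rfl hxy
        | (rw [va, vb]; intro h; linarith)
        | (rw [va, vc]; intro h; linarith)
        | (rw [vb, va]; intro h; linarith)
        | (rw [vb, vc]; intro h; linarith)
        | (rw [vc, va]; intro h; linarith)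
        | (rw [vc, vb]; intro h; linarith)

lemma W_normalized (hab : a ≠ b) (hac : a ≠ c) (hbc : b ≠ c) (s : ℝ) :
    Normalized (W a b c s) := by
  unfold Normalized
  rw [sum_three hab hac hbc, W_a, W_b hab, W_c hac hbc]
  ring

lemma W_mu (hab : a ≠ b) (hac : a ≠ c) (hbc : b ≠ c) (s : ℝ) :
    mu (W a b c s) a b c = s := by
  rw [mu, W_a, W_b hab, W_c hac hbc]
  field_simp
  ring

lemma cone_mu_mem {v : Fin 3 → ℝ} (hv1 : v a > v b) (hv2 : v b > v c) :
    0 < mu v a b c ∧ mu v a b c < 1 := by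
  have hd : (0:ℝ) < v a - v c := by linarith
  unfold mu
  constructor
  · exact div_pos (by linarith) hd
  · rw [div_lt_one hd]; linarith

end Stmt9

namespace Stmt9

section Rule

variable {φ : (Fin 3 → Fin 3 → ℝ) → Fin 3 → Fin 3 → ℝ}
variable {a b c : Fin 3}

lemma ntp_update {P : Fin 3 → Fin 3 → ℝ} (hP : NoTiesProfile P) {m : Fin 3} {v : Fin 3 → ℝ}
    (hv : NoTies v) : NoTiesProfile (Function.update P m v) := by
  intro n
  rcases eq_or_ne n m with rfl | h
  · simpa using hv
  · rw [Function.update_of_ne h]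
    exact hP n

lemma rowsum (hB : BistochasticValued φ) {P : Fin 3 → Fin 3 → ℝ} (hP : NoTiesProfile P)
    (m : Fin 3) : ∑ x, φ P m x = 1 := (hB P hP).2.1 m

lemma entry_nonneg (hB : BistochasticValued φ) {P : Fin 3 → Fin 3 → ℝ} (hP : NoTiesProfile P)
    (m x : Fin 3) : 0 ≤ φ P m x := (hB P hP).1 m x

/-- Conversion of EU comparisons into `π a + μ · π b` comparisons, for cone utilities. -/
lemma EU_F (hab : a ≠ b) (hac : a ≠ c) (hbc : b ≠ c) {v : Fin 3 → ℝ}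
    (hv1 : v a > v b) (hv2 : v b > v c)
    {π π' : Fin 3 → ℝ} (hπ : ∑ x, π x = 1) (hπ' : ∑ x, π' x = 1)
    (h : EU v π ≥ EU v π') :
    π a + mu v a b c * π b ≥ π' a + mu v a b c * π' b := by
  have hd : (0:ℝ) < v a - v c := by linarith
  have hmu : mu v a b c * (v a - v c) = v b - v c := div_mul_cancel₀ _ (ne_of_gt hd)
  rw [sum_three hab hac hbc] at hπ hπ'
  unfold EU at h
  rw [sum_three hab hac hbc (f := fun x => v x * π x),
    sum_three hab hac hbc (f := fun x => v x * π' x)] at h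
  have e1 : v a * π a + v b * π b + v c * π c
      = v c + (v a - v c) * (π a + mu v a b c * π b) := by
    linear_combination (-(π b)) * hmu + v c * hπ
  have e2 : v a * π' a + v b * π' b + v c * π' c
      = v c + (v a - v c) * (π' a + mu v a b c * π' b) := by
    linear_combination (-(π' b)) * hmu + v c * hπ'
  have h2 : (v a - v c) * (π' a + mu v a b c * π' b)
      ≤ (v a - v c) * (π a + mu v a b c * π b) := by linarith
  exact (mul_le_mul_iff_right₀ hd).mp h2

lemma spBase (hSP : StrategyProof φ) {p : Fin 3 → Fin 3 → ℝ} (hp : NoTiesProfile p)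
    (m : Fin 3) {v' : Fin 3 → ℝ} (hv' : NoTies v') :
    EU (p m) (φ p m) ≥ EU (p m) (φ (Function.update p m v') m) := hSP p m v' hp hv'

lemma spDev (hSP : StrategyProof φ) {p : Fin 3 → Fin 3 → ℝ} (hp : NoTiesProfile p)
    (m : Fin 3) {v' : Fin 3 → ℝ} (hv' : NoTies v') :
    EU v' (φ (Function.update p m v') m) ≥ EU v' (φ p m) := by
  have h := hSP (Function.update p m v') m (p m) (ntp_update hp hv') (hp m)
  rw [Function.update_self] at h
  rwa [Function.update_idem, Function.update_eq_self] at h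

/-- SP envelope inequality, base side, in F-form. -/
lemma FA (hab : a ≠ b) (hac : a ≠ c) (hbc : b ≠ c)
    (hB : BistochasticValued φ) (hSP : StrategyProof φ)
    {p : Fin 3 → Fin 3 → ℝ} (hp : NoTiesProfile p) (m : Fin 3)
    (hc1 : p m a > p m b) (hc2 : p m b > p m c)
    {t : ℝ} (ht0 : 0 < t) (ht1 : t < 1) :
    (φ p m) a + mu (p m) a b c * (φ p m) b ≥
      (φ (Function.update p m (W a b c t)) m) a
        + mu (p m) a b c * (φ (Function.update p m (W a b c t)) m) b := by
  have hWt := W_noTies hab hac hbc ht0 ht1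
  have h := spBase hSP hp m (v' := W a b c t) hWt
  exact EU_F hab hac hbc hc1 hc2 (rowsum hB hp m)
    (rowsum hB (ntp_update hp hWt) m) h

/-- SP envelope inequality, deviation side, in F-form. -/
lemma FB (hab : a ≠ b) (hac : a ≠ c) (hbc : b ≠ c)
    (hB : BistochasticValued φ) (hSP : StrategyProof φ)
    {p : Fin 3 → Fin 3 → ℝ} (hp : NoTiesProfile p) (m : Fin 3)
    {t : ℝ} (ht0 : 0 < t) (ht1 : t < 1) :
    (φ (Function.update p m (W a b c t)) m) a + t * (φ (Function.update p m (W a b c t)) m) b ≥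
      (φ p m) a + t * (φ p m) b := by
  have hWt := W_noTies hab hac hbc ht0 ht1
  have h := spDev hSP hp m (v' := W a b c t) hWt
  have hcone := W_cone hab hac hbc ht0 ht1 (s := t)
  have h2 := EU_F hab hac hbc hcone.1 hcone.2
    (rowsum hB (ntp_update hp hWt) m) (rowsum hB hp m) h
  rwa [W_mu hab hac hbc] at h2


/-- F-inequality along the `W` path. -/
lemma pathF (hab : a ≠ b) (hac : a ≠ c) (hbc : b ≠ c)
    (hB : BistochasticValued φ) (hSP : StrategyProof φ)
    {Q : Fin 3 → Fin 3 → ℝ} (hQ : NoTiesProfile Q) (m : Fin 3)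
    {s t : ℝ} (hs0 : 0 < s) (hs1 : s < 1) (ht0 : 0 < t) (ht1 : t < 1) :
    (φ (Function.update Q m (W a b c s)) m) a + s * (φ (Function.update Q m (W a b c s)) m) b ≥
    (φ (Function.update Q m (W a b c t)) m) a + s * (φ (Function.update Q m (W a b c t)) m) b := by
  have hWs := W_noTies hab hac hbc hs0 hs1
  have hp : NoTiesProfile (Function.update Q m (W a b c s)) := ntp_update hQ hWs
  have hpm : (Function.update Q m (W a b c s)) m = W a b c s := Function.update_self _ _ _
  have hcone := W_cone hab hac hbc hs0 hs1 (s := s)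
  have h := FA hab hac hbc hB hSP hp m (by rw [hpm]; exact hcone.1)
    (by rw [hpm]; exact hcone.2) ht0 ht1
  rw [Function.update_idem, hpm, W_mu hab hac hbc] at h
  exact h

lemma pathMono (hab : a ≠ b) (hac : a ≠ c) (hbc : b ≠ c)
    (hB : BistochasticValued φ) (hSP : StrategyProof φ)
    {Q : Fin 3 → Fin 3 → ℝ} (hQ : NoTiesProfile Q) (m : Fin 3)
    {s t : ℝ} (hs0 : 0 < s) (hs1 : s < 1) (ht0 : 0 < t) (ht1 : t < 1) (hst : s ≤ t) :
    (φ (Function.update Q m (W a b c s)) m) b ≤ (φ (Function.update Q m (W a b c t)) m) b := by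
  rcases eq_or_lt_of_le hst with rfl | hlt
  · exact le_refl _
  · have h1 := pathF hab hac hbc hB hSP hQ m hs0 hs1 ht0 ht1
    have h2 := pathF hab hac hbc hB hSP hQ m ht0 ht1 hs0 hs1
    nlinarith

lemma pathRowEq (hab : a ≠ b) (hac : a ≠ c) (hbc : b ≠ c)
    (hB : BistochasticValued φ) (hSP : StrategyProof φ)
    {Q : Fin 3 → Fin 3 → ℝ} (hQ : NoTiesProfile Q) (m : Fin 3)
    {s t : ℝ} (hs0 : 0 < s) (hs1 : s < 1) (ht0 : 0 < t) (ht1 : t < 1)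
    (hb : (φ (Function.update Q m (W a b c s)) m) b = (φ (Function.update Q m (W a b c t)) m) b) :
    φ (Function.update Q m (W a b c s)) m = φ (Function.update Q m (W a b c t)) m := by
  have h1 := pathF hab hac hbc hB hSP hQ m hs0 hs1 ht0 ht1
  have h2 := pathF hab hac hbc hB hSP hQ m ht0 ht1 hs0 hs1
  have hps : NoTiesProfile (Function.update Q m (W a b c s)) :=
    ntp_update hQ (W_noTies hab hac hbc hs0 hs1)
  have hpt : NoTiesProfile (Function.update Q m (W a b c t)) :=
    ntp_update hQ (W_noTies hab hac hbc ht0 ht1)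
  have rs := rowsum hB hps m
  have rt := rowsum hB hpt m
  rw [sum_three hab hac hbc] at rs rt
  rw [hb] at h1 h2
  have ha : (φ (Function.update Q m (W a b c s)) m) a
      = (φ (Function.update Q m (W a b c t)) m) a := by linarith
  exact funext3 hab hac hbc ha hb (by linarith)

lemma pathMatEq (hab : a ≠ b) (hac : a ≠ c) (hbc : b ≠ c)
    (hB : BistochasticValued φ) (hSP : StrategyProof φ) (hNB : NonBossy φ)
    {Q : Fin 3 → Fin 3 → ℝ} (hQ : NoTiesProfile Q) (m : Fin 3)
    {s t : ℝ} (hs0 : 0 < s) (hs1 : s < 1) (ht0 : 0 < t) (ht1 : t < 1)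
    (hb : (φ (Function.update Q m (W a b c s)) m) b = (φ (Function.update Q m (W a b c t)) m) b) :
    φ (Function.update Q m (W a b c s)) = φ (Function.update Q m (W a b c t)) := by
  have hps : NoTiesProfile (Function.update Q m (W a b c s)) :=
    ntp_update hQ (W_noTies hab hac hbc hs0 hs1)
  have h := hNB (Function.update Q m (W a b c s)) m (W a b c t) hps
    (W_noTies hab hac hbc ht0 ht1)
    (by rw [Function.update_idem]
        exact pathRowEq hab hac hbc hB hSP hQ m hs0 hs1 ht0 ht1 hb)
  rwa [Function.update_idem] at h

lemma pathPos (hab : a ≠ b) (hac : a ≠ c) (hbc : b ≠ c)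
    (hB : BistochasticValued φ) (hSP : StrategyProof φ)
    {Q : Fin 3 → Fin 3 → ℝ} (hQ : NoTiesProfile Q) (m : Fin 3)
    {s t : ℝ} (hs0 : 0 < s) (hs1 : s < 1) (ht0 : 0 < t) (ht1 : t < 1)
    (hlt : (φ (Function.update Q m (W a b c s)) m) b < (φ (Function.update Q m (W a b c t)) m) b) :
    0 < (φ (Function.update Q m (W a b c s)) m) a
      ∧ 0 < (φ (Function.update Q m (W a b c s)) m) c := by
  have h1 := pathF hab hac hbc hB hSP hQ m hs0 hs1 ht0 ht1
  have h2 := pathF hab hac hbc hB hSP hQ m ht0 ht1 hs0 hs1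
  have hps : NoTiesProfile (Function.update Q m (W a b c s)) :=
    ntp_update hQ (W_noTies hab hac hbc hs0 hs1)
  have hpt : NoTiesProfile (Function.update Q m (W a b c t)) :=
    ntp_update hQ (W_noTies hab hac hbc ht0 ht1)
  have rs := rowsum hB hps m
  have rt := rowsum hB hpt m
  rw [sum_three hab hac hbc] at rs rt
  have na := entry_nonneg hB hpt m a
  have nc := entry_nonneg hB hpt m c
  constructor
  · nlinarith [mul_pos hs0 (sub_pos.2 hlt)]
  · nlinarith [mul_pos (sub_pos.2 ht1) (sub_pos.2 hlt)]


lemma seq_aux (x δ : ℝ) : Tendsto (fun n : ℕ => x + δ/((n:ℝ)+2)) atTop (𝓝 x) := by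
  have h0 : Tendsto (fun n : ℕ => ((n:ℝ)+2)) atTop atTop :=
    tendsto_atTop_add_const_right atTop 2 (tendsto_natCast_atTop_atTop (R := ℝ))
  have h1 : Tendsto (fun n : ℕ => ((n:ℝ)+2)⁻¹) atTop (𝓝 0) := h0.inv_tendsto_atTop
  have h2 : Tendsto (fun n : ℕ => x + δ * ((n:ℝ)+2)⁻¹) atTop (𝓝 (x + δ * 0)) :=
    tendsto_const_nhds.add (h1.const_mul δ)
  simpa [div_eq_mul_inv] using h2

lemma seq_down {α β : ℝ} (h : α < β) :
    ∃ sq : ℕ → ℝ, Tendsto sq atTop (𝓝 α) ∧ ∀ n, α < sq n ∧ sq n < β := by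
  refine ⟨fun n => α + (β - α)/((n:ℝ)+2), seq_aux α (β - α), fun n => ⟨?_, ?_⟩⟩
  · show α < α + (β - α)/((n:ℝ)+2)
    have hpos : (0:ℝ) < ((n:ℝ)+2) := by positivity
    have : (0:ℝ) < (β - α)/((n:ℝ)+2) := div_pos (by linarith) hpos
    linarith
  · show α + (β - α)/((n:ℝ)+2) < β
    have h2 : (β - α)/((n:ℝ)+2) < β - α := by
      apply div_lt_self (by linarith)
      have : (0:ℝ) ≤ (n:ℝ) := Nat.cast_nonneg n
      linarith
    linarith

lemma seq_up {α β : ℝ} (h : α < β) :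
    ∃ sq : ℕ → ℝ, Tendsto sq atTop (𝓝 β) ∧ ∀ n, α < sq n ∧ sq n < β := by
  refine ⟨fun n => β + (α - β)/((n:ℝ)+2), seq_aux β (α - β), fun n => ⟨?_, ?_⟩⟩
  · show α < β + (α - β)/((n:ℝ)+2)
    have h2 : (β - α)/((n:ℝ)+2) < β - α := by
      apply div_lt_self (by linarith)
      have : (0:ℝ) ≤ (n:ℝ) := Nat.cast_nonneg n
      linarith
    have h3 : (α - β)/((n:ℝ)+2) = -((β - α)/((n:ℝ)+2)) := by ring
    rw [h3]
    linarith
  · show β + (α - β)/((n:ℝ)+2) < β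
    have hpos : (0:ℝ) < ((n:ℝ)+2) := by positivity
    have : (0:ℝ) < (β - α)/((n:ℝ)+2) := div_pos (by linarith) hpos
    have h3 : (α - β)/((n:ℝ)+2) = -((β - α)/((n:ℝ)+2)) := by ring
    rw [h3]
    linarith

/-- Continuity (via sequences) of the rule along the `W` path. -/
lemma conv (hab : a ≠ b) (hac : a ≠ c) (hbc : b ≠ c) (hC : NCContinuous φ)
    {Q : Fin 3 → Fin 3 → ℝ} (hQ : NoTiesProfile Q) (m : Fin 3)
    {s0 : ℝ} (h00 : 0 < s0) (h01 : s0 < 1) {sq : ℕ → ℝ}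
    (hsq : ∀ n, 0 < sq n ∧ sq n < 1) (hlim : Tendsto sq atTop (𝓝 s0)) :
    Tendsto (fun n => φ (Function.update Q m (W a b c (sq n)))) atTop
      (𝓝 (φ (Function.update Q m (W a b c s0)))) := by
  have base : NoTiesProfile (Function.update Q m (W a b c s0)) :=
    ntp_update hQ (W_noTies hab hac hbc h00 h01)
  have hNorm : Normalized ((Function.update Q m (W a b c s0)) m) := by
    rw [Function.update_self]
    exact W_normalized hab hac hbc s0
  have hWs : ∀ n, NoTies (W a b c (sq n)) ∧ Normalized (W a b c (sq n)) := fun n =>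
    ⟨W_noTies hab hac hbc (hsq n).1 (hsq n).2, W_normalized hab hac hbc (sq n)⟩
  have hWlim : Tendsto (fun n => W a b c (sq n)) atTop
      (𝓝 ((Function.update Q m (W a b c s0)) m)) := by
    rw [Function.update_self, tendsto_pi_nhds]
    intro x
    rcases exhaust3 hab hac hbc x with rfl | rfl | rfl
    · simp only [W_a]
      exact tendsto_const_nhds.sub (hlim.div_const 3)
    · simp only [W_b hab]
      exact (hlim.const_mul 2).div_const 3
    · simp only [W_c hac hbc]
      exact (hlim.div_const 3).neg
  have h := hC (Function.update Q m (W a b c s0)) m (fun n => W a b c (sq n))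
    base hNorm hWs hWlim
  simpa only [Function.update_idem] using h

lemma conv_entry (hab : a ≠ b) (hac : a ≠ c) (hbc : b ≠ c) (hC : NCContinuous φ)
    {Q : Fin 3 → Fin 3 → ℝ} (hQ : NoTiesProfile Q) (m : Fin 3)
    {s0 : ℝ} (h00 : 0 < s0) (h01 : s0 < 1) {sq : ℕ → ℝ}
    (hsq : ∀ n, 0 < sq n ∧ sq n < 1) (hlim : Tendsto sq atTop (𝓝 s0)) (m' x : Fin 3) :
    Tendsto (fun n => φ (Function.update Q m (W a b c (sq n))) m' x) atTop
      (𝓝 (φ (Function.update Q m (W a b c s0)) m' x)) := by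
  have h := conv hab hac hbc hC hQ m h00 h01 hsq hlim
  exact tendsto_pi_nhds.mp (tendsto_pi_nhds.mp h m') x

/-- SP cross inequality between truth and a path report. -/
lemma mixedMono (hab : a ≠ b) (hac : a ≠ c) (hbc : b ≠ c)
    (hB : BistochasticValued φ) (hSP : StrategyProof φ)
    {p : Fin 3 → Fin 3 → ℝ} (hp : NoTiesProfile p) (m : Fin 3)
    (hc1 : p m a > p m b) (hc2 : p m b > p m c) {t : ℝ} (ht0 : 0 < t) (ht1 : t < 1) :
    (t - mu (p m) a b c) * ((φ (Function.update p m (W a b c t)) m) b - (φ p m) b) ≥ 0 := by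
  have h1 := FA hab hac hbc hB hSP hp m hc1 hc2 ht0 ht1
  have h2 := FB hab hac hbc hB hSP hp m ht0 ht1
  nlinarith

/-- The allocation at a cone utility coincides with the allocation at the path point
with the same rate of middle substitution. -/
lemma anchorPath (hab : a ≠ b) (hac : a ≠ c) (hbc : b ≠ c)
    (hB : BistochasticValued φ) (hSP : StrategyProof φ) (hNB : NonBossy φ) (hC : NCContinuous φ)
    {p : Fin 3 → Fin 3 → ℝ} (hp : NoTiesProfile p) (m : Fin 3)
    (hc1 : p m a > p m b) (hc2 : p m b > p m c) :
    φ (Function.update p m (W a b c (mu (p m) a b c))) = φ p := by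
  obtain ⟨hτ0, hτ1⟩ := cone_mu_mem hc1 hc2
  -- b-component equality, via mixed monotonicity and continuity from both sides
  obtain ⟨squ, hsqu_lim, hsqu_mem⟩ := seq_down hτ1
  obtain ⟨sql, hsql_lim, hsql_mem⟩ := seq_up hτ0
  have hup : ∀ n, (φ p m) b ≤ (φ (Function.update p m (W a b c (squ n))) m) b := by
    intro n
    have h := mixedMono hab hac hbc hB hSP hp m hc1 hc2
      (lt_trans hτ0 (hsqu_mem n).1) (hsqu_mem n).2
    have h2 := (hsqu_mem n).1
    nlinarith
  have hdn : ∀ n, (φ (Function.update p m (W a b c (sql n))) m) b ≤ (φ p m) b := by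
    intro n
    have h := mixedMono hab hac hbc hB hSP hp m hc1 hc2
      (hsql_mem n).1 (lt_trans (hsql_mem n).2 hτ1)
    have h2 := (hsql_mem n).2
    nlinarith
  have hsqu_mem' : ∀ n, 0 < squ n ∧ squ n < 1 := fun n =>
    ⟨lt_trans hτ0 (hsqu_mem n).1, (hsqu_mem n).2⟩
  have hsql_mem' : ∀ n, 0 < sql n ∧ sql n < 1 := fun n =>
    ⟨(hsql_mem n).1, lt_trans (hsql_mem n).2 hτ1⟩
  have hconvu := conv_entry hab hac hbc hC hp m hτ0 hτ1 hsqu_mem' hsqu_lim m b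
  have hconvl := conv_entry hab hac hbc hC hp m hτ0 hτ1 hsql_mem' hsql_lim m b
  have hge : (φ p m) b ≤ (φ (Function.update p m (W a b c (mu (p m) a b c))) m) b :=
    ge_of_tendsto' hconvu hup
  have hle : (φ (Function.update p m (W a b c (mu (p m) a b c))) m) b ≤ (φ p m) b :=
    le_of_tendsto' hconvl hdn
  have hbeq : (φ (Function.update p m (W a b c (mu (p m) a b c))) m) b = (φ p m) b := le_antisymm hle hge
  -- a-component via the two F-inequalities at τ
  have h1 := FA hab hac hbc hB hSP hp m hc1 hc2 hτ0 hτ1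
  have h2 := FB hab hac hbc hB hSP hp m hτ0 hτ1
  rw [hbeq] at h1 h2
  have haeq : (φ (Function.update p m (W a b c (mu (p m) a b c))) m) a = (φ p m) a := by linarith
  -- c-component via row sums
  have rs := rowsum hB (ntp_update (m := m) hp (W_noTies hab hac hbc hτ0 hτ1)) m
  have rt := rowsum hB hp m
  rw [sum_three hab hac hbc] at rs rt
  have hrow : φ (Function.update p m (W a b c (mu (p m) a b c))) m = φ p m :=
    funext3 hab hac hbc haeq hbeq (by linarith)
  have h := hNB p m (W a b c (mu (p m) a b c)) hp (W_noTies hab hac hbc hτ0 hτ1) hrow.symm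
  exact h.symm


/-- If agent `i`'s row has positive a- and c-entries and agent `j`'s b-entry vanishes,
then `j`'s a- and c-entries are positive. -/
lemma zpos (hab : a ≠ b) (hac : a ≠ c) (hbc : b ≠ c) {B : Fin 3 → Fin 3 → ℝ}
    (hBi : Bistochastic B) {i j : Fin 3} (hij : i ≠ j)
    (hia : 0 < B i a) (hic : 0 < B i c) (hjb : B j b = 0) :
    0 < B j a ∧ 0 < B j c := by
  obtain ⟨k, hki, hkj⟩ := third' i j hij
  have rj := hBi.2.1 j
  rw [sum_three hab hac hbc] at rj
  have ca := hBi.2.2 a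
  have cc := hBi.2.2 c
  rw [sum_three hij (Ne.symm hki) (Ne.symm hkj)] at ca cc
  have nka := hBi.1 k a
  have nkc := hBi.1 k c
  have nja := hBi.1 j a
  have njc := hBi.1 j c
  have hia1 : B i a ≤ 1 - B j a - B k a := by linarith
  constructor
  · -- if B j a = 0 then B j c = 1, so column c exceeds 1
    rcases lt_or_ge 0 (B j a) with h | h
    · exact h
    · exfalso
      have hja0 : B j a = 0 := le_antisymm h nja
      have : B j c = 1 := by linarith
      linarith
  · rcases lt_or_ge 0 (B j c) with h | h
    · exact h
    · exfalso
      have hjc0 : B j c = 0 := le_antisymm h njc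
      have : B j a = 1 := by linarith
      linarith

/-- The efficiency trade: if the low-rate agent `l` holds some `b` while the high-rate
agent `h` holds both `a` and `c`, the allocation is Pareto-dominated. -/
lemma trade (hab : a ≠ b) (hac : a ≠ c) (hbc : b ≠ c)
    (hB : BistochasticValued φ) (hE : Efficient φ)
    {Q : Fin 3 → Fin 3 → ℝ} (hQ : NoTiesProfile Q) {l h : Fin 3} (hlh : l ≠ h)
    (hcl1 : Q l a > Q l b) (hcl2 : Q l b > Q l c)
    (hch1 : Q h a > Q h b) (hch2 : Q h b > Q h c)
    {x : ℝ} (hx0 : 0 < x) (hx1 : x < 1)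
    (hxl : mu (Q l) a b c < x) (hxh : x < mu (Q h) a b c)
    (hlb : 0 < φ Q l b) (hha : 0 < φ Q h a) (hhc : 0 < φ Q h c) : False := by
  obtain ⟨k, hkl, hkh⟩ := third' l h hlh
  set ε := min (φ Q l b) (min (φ Q h a) (φ Q h c)) with hεdef
  have hε0 : 0 < ε := lt_min hlb (lt_min hha hhc)
  have hε1 : ε ≤ φ Q l b := min_le_left _ _
  have hε2 : ε ≤ φ Q h a := le_trans (min_le_right _ _) (min_le_left _ _)
  have hε3 : ε ≤ φ Q h c := le_trans (min_le_right _ _) (min_le_right _ _)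
  set D : Fin 3 → Fin 3 → ℝ := fun m y =>
    if m = l then (if y = a then ε*x else if y = b then -ε else ε*(1-x))
    else if m = h then (if y = a then -(ε*x) else if y = b then ε else -(ε*(1-x)))
    else 0 with hD
  have Dla : D l a = ε*x := by rw [hD]; simp
  have Dlb : D l b = -ε := by rw [hD]; simp [Ne.symm hab]
  have Dlc : D l c = ε*(1-x) := by rw [hD]; simp [Ne.symm hac, Ne.symm hbc]
  have Dha : D h a = -(ε*x) := by rw [hD]; simp [Ne.symm hlh]
  have Dhb : D h b = ε := by rw [hD]; simp [Ne.symm hlh, Ne.symm hab]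
  have Dhc : D h c = -(ε*(1-x)) := by rw [hD]; simp [Ne.symm hlh, Ne.symm hac, Ne.symm hbc]
  have Dother : ∀ m y, m ≠ l → m ≠ h → D m y = 0 := by
    intro m y h1 h2
    rw [hD]
    simp [h1, h2]
  have hbi := hB Q hQ
  -- the dominating matrix
  set π' : Fin 3 → Fin 3 → ℝ := fun m y => φ Q m y + D m y with hπ'
  have hrowD : ∀ m, ∑ y, D m y = 0 := by
    intro m
    rw [sum_three hab hac hbc]
    by_cases h1 : m = l
    · subst h1
      rw [Dla, Dlb, Dlc]
      ring
    · by_cases h2 : m = h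
      · subst h2
        rw [Dha, Dhb, Dhc]
        ring
      · rw [Dother m a h1 h2, Dother m b h1 h2, Dother m c h1 h2]
        ring
  have hcolD : ∀ y, ∑ m, D m y = 0 := by
    intro y
    rw [sum_three hlh (Ne.symm hkl) (Ne.symm hkh)]
    rw [Dother k y hkl hkh]
    rcases exhaust3 hab hac hbc y with rfl | rfl | rfl
    · rw [Dla, Dha]; ring
    · rw [Dlb, Dhb]; ring
    · rw [Dlc, Dhc]; ring
  have hπbist : Bistochastic π' := by
    refine ⟨?_, ?_, ?_⟩
    · intro m y
      have hn := hbi.1 m y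
      show 0 ≤ φ Q m y + D m y
      by_cases h1 : m = l
      · subst h1
        rcases exhaust3 hab hac hbc y with rfl | rfl | rfl
        · rw [Dla]; nlinarith
        · rw [Dlb]; linarith
        · rw [Dlc]; nlinarith
      · by_cases h2 : m = h
        · subst h2
          rcases exhaust3 hab hac hbc y with rfl | rfl | rfl
          · rw [Dha]; nlinarith
          · rw [Dhb]; linarith
          · rw [Dhc]; nlinarith
        · rw [Dother m y h1 h2]; linarith
    · intro m
      have : ∑ y, (φ Q m y + D m y) = ∑ y, φ Q m y + ∑ y, D m y :=
        Finset.sum_add_distrib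
      show ∑ y, (φ Q m y + D m y) = 1
      rw [this, hbi.2.1 m, hrowD m]
      ring
    · intro y
      have : ∑ m, (φ Q m y + D m y) = ∑ m, φ Q m y + ∑ m, D m y :=
        Finset.sum_add_distrib
      show ∑ m, (φ Q m y + D m y) = 1
      rw [this, hbi.2.2 y, hcolD y]
      ring
  -- EU gains
  have hdl : (0:ℝ) < Q l a - Q l c := by linarith
  have hdh : (0:ℝ) < Q h a - Q h c := by linarith
  have keyl : Q l b - Q l c < x * (Q l a - Q l c) := by
    have := (div_lt_iff₀ hdl).mp hxl
    linarith
  have keyh : x * (Q h a - Q h c) < Q h b - Q h c := by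
    have := (lt_div_iff₀ hdh).mp hxh
    linarith
  have gainl : EU (Q l) (π' l) > EU (Q l) (φ Q l) := by
    unfold EU
    rw [sum_three hab hac hbc (f := fun y => Q l y * π' l y),
      sum_three hab hac hbc (f := fun y => Q l y * φ Q l y)]
    show Q l a * (φ Q l a + D l a) + Q l b * (φ Q l b + D l b) + Q l c * (φ Q l c + D l c) >
      Q l a * φ Q l a + Q l b * φ Q l b + Q l c * φ Q l c
    rw [Dla, Dlb, Dlc]
    nlinarith
  have gainh : EU (Q h) (π' h) > EU (Q h) (φ Q h) := by
    unfold EU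
    rw [sum_three hab hac hbc (f := fun y => Q h y * π' h y),
      sum_three hab hac hbc (f := fun y => Q h y * φ Q h y)]
    show Q h a * (φ Q h a + D h a) + Q h b * (φ Q h b + D h b) + Q h c * (φ Q h c + D h c) >
      Q h a * φ Q h a + Q h b * φ Q h b + Q h c * φ Q h c
    rw [Dha, Dhb, Dhc]
    nlinarith
  have gaink : EU (Q k) (π' k) = EU (Q k) (φ Q k) := by
    unfold EU
    apply Finset.sum_congr rfl
    intro y _
    show Q k y * (φ Q k y + D k y) = Q k y * φ Q k y
    rw [Dother k y hkl hkh]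
    ring
  apply hE Q hQ
  refine ⟨π', hπbist, ?_, l, gainl⟩
  intro m
  by_cases h1 : m = l
  · subst h1; exact le_of_lt gainl
  · by_cases h2 : m = h
    · subst h2; exact le_of_lt gainh
    · have : m = k := by
        rcases third' l h hlh with ⟨k', _, _⟩
        rcases exhaust3' l h k m hlh (Ne.symm hkl) (Ne.symm hkh) with rfl | rfl | rfl
        · exact absurd rfl h1
        · exact absurd rfl h2
        · rfl
      subst this
      exact le_of_eq gaink.symm


/-- Step A: from any rise of the b-entry along the path, find a rise starting from a
positive value, at a point distinct from any given exceptional point `τ`. -/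
lemma stepA (hab : a ≠ b) (hac : a ≠ c) (hbc : b ≠ c)
    (hB : BistochasticValued φ) (hSP : StrategyProof φ) (hC : NCContinuous φ)
    {Q : Fin 3 → Fin 3 → ℝ} (hQ : NoTiesProfile Q) (i : Fin 3) {s t τ : ℝ}
    (hs0 : 0 < s) (hs1 : s < 1) (ht0 : 0 < t) (ht1 : t < 1) (hst : s < t)
    (hlt : φ (Function.update Q i (W a b c s)) i b < φ (Function.update Q i (W a b c t)) i b) :
    ∃ σ σ'', (0 < σ ∧ σ < 1) ∧ (0 < σ'' ∧ σ'' < 1) ∧ σ < σ'' ∧ σ ≠ τ ∧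
      0 < φ (Function.update Q i (W a b c σ)) i b ∧
      φ (Function.update Q i (W a b c σ)) i b
        < φ (Function.update Q i (W a b c σ'')) i b := by
  -- notation-free: we repeatedly use monotonicity and continuity of the b-entry
  have hmono : ∀ {u v : ℝ}, 0 < u → u < 1 → 0 < v → v < 1 → u ≤ v →
      φ (Function.update Q i (W a b c u)) i b ≤ φ (Function.update Q i (W a b c v)) i b :=
    fun hu0 hu1 hv0 hv1 huv => pathMono hab hac hbc hB hSP hQ i hu0 hu1 hv0 hv1 huv
  have hnn : ∀ {u : ℝ}, 0 < u → u < 1 → 0 ≤ φ (Function.update Q i (W a b c u)) i b :=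
    fun hu0 hu1 => entry_nonneg hB (ntp_update hQ (W_noTies hab hac hbc hu0 hu1)) i b
  rcases eq_or_lt_of_le (hnn hs0 hs1) with hbs0 | hbs0
  · -- b-entry vanishes at s
    set Z := {z : ℝ | (s ≤ z ∧ z ≤ t) ∧ φ (Function.update Q i (W a b c z)) i b = 0} with hZ
    have hsZ : s ∈ Z := ⟨⟨le_refl s, le_of_lt hst⟩, hbs0.symm⟩
    have hZne : Z.Nonempty := ⟨s, hsZ⟩
    have hZbdd : BddAbove Z := ⟨t, fun z hz => hz.1.2⟩
    set ζ := sSup Z with hζ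
    have hζs : s ≤ ζ := le_csSup hZbdd hsZ
    have hζt : ζ ≤ t := csSup_le hZne (fun z hz => hz.1.2)
    have hζ0 : 0 < ζ := lt_of_lt_of_le hs0 hζs
    have hζ1 : ζ < 1 := lt_of_le_of_lt hζt ht1
    have hzero : ∀ z, s ≤ z → z < ζ → φ (Function.update Q i (W a b c z)) i b = 0 := by
      intro z hz1 hz2
      obtain ⟨w, hwZ, hzw⟩ := exists_lt_of_lt_csSup hZne hz2
      have hz0 : 0 < z := lt_of_lt_of_le hs0 hz1
      have hz1' : z < 1 := lt_trans (lt_of_lt_of_le hz2 hζt) ht1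
      have h1 : φ (Function.update Q i (W a b c z)) i b
          ≤ φ (Function.update Q i (W a b c w)) i b :=
        hmono hz0 hz1' (lt_of_lt_of_le hs0 hwZ.1.1) (lt_of_le_of_lt hwZ.1.2 ht1) (le_of_lt hzw)
      have h2 := hnn hz0 hz1'
      rw [hwZ.2] at h1
      linarith
    have hbζ : φ (Function.update Q i (W a b c ζ)) i b = 0 := by
      rcases eq_or_lt_of_le hζs with h | h
      · rw [← h]; exact hbs0.symm
      · obtain ⟨sq, hsq_lim, hsq_mem⟩ := seq_up h
        have hconv := conv_entry hab hac hbc hC hQ i hζ0 hζ1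
          (fun n => ⟨lt_trans hs0 (hsq_mem n).1, lt_trans (hsq_mem n).2 hζ1⟩) hsq_lim i b
        have hzeroes : ∀ n, φ (Function.update Q i (W a b c (sq n))) i b = 0 :=
          fun n => hzero (sq n) (le_of_lt (hsq_mem n).1) (hsq_mem n).2
        have : Tendsto (fun n => φ (Function.update Q i (W a b c (sq n))) i b) atTop (𝓝 0) := by
          rw [tendsto_congr hzeroes]
          exact tendsto_const_nhds
        exact (tendsto_nhds_unique hconv this)
    have hζltt : ζ < t := by
      rcases eq_or_lt_of_le hζt with h | h
      · exfalso
        rw [h] at hbζ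
        linarith
      · exact h
    have hposafter : ∀ z, ζ < z → z ≤ t → 0 < φ (Function.update Q i (W a b c z)) i b := by
      intro z hz1 hz2
      have hz0 : 0 < z := lt_trans hζ0 hz1
      have hz1' : z < 1 := lt_of_le_of_lt hz2 ht1
      rcases eq_or_lt_of_le (hnn hz0 hz1') with h | h
      · exfalso
        have : z ∈ Z := ⟨⟨le_trans hζs (le_of_lt hz1), hz2⟩, h.symm⟩
        have := le_csSup hZbdd this
        linarith
      · exact h
    -- find σ in (ζ, t), ≠ τ, with b-entry < b-entry at t
    by_contra hno
    push_neg at hno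
    -- every candidate fails, so the b-entry is constant = value at t near ζ from the right
    set ub := if ζ < τ ∧ τ < t then τ else t with hub
    have hubp : ζ < ub ∧ ub ≤ t ∧ ∀ z, ζ < z → z < ub → z ≠ τ := by
      rw [hub]
      by_cases hcond : ζ < τ ∧ τ < t
      · rw [if_pos hcond]
        exact ⟨hcond.1, le_of_lt hcond.2, fun z _ hz2 => ne_of_lt hz2⟩
      · rw [if_neg hcond]
        refine ⟨hζltt, le_refl t, fun z hz1 hz2 => ?_⟩
        rcases not_and_or.mp hcond with h | h
        · push_neg at h
          exact ne_of_gt (lt_of_le_of_lt h hz1)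
        · push_neg at h
          exact ne_of_lt (lt_of_lt_of_le hz2 h)
    obtain ⟨sq, hsq_lim, hsq_mem⟩ := seq_down hubp.1
    have hsqmem' : ∀ n, 0 < sq n ∧ sq n < 1 := fun n =>
      ⟨lt_trans hζ0 (hsq_mem n).1,
        lt_of_lt_of_le (hsq_mem n).2 (le_trans hubp.2.1 (le_of_lt ht1))⟩
    have hconst : ∀ n, φ (Function.update Q i (W a b c (sq n))) i b
        = φ (Function.update Q i (W a b c t)) i b := by
      intro n
      have h1 : sq n < t := lt_of_lt_of_le (hsq_mem n).2 hubp.2.1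
      have h2 : sq n ≠ τ := hubp.2.2 (sq n) (hsq_mem n).1 (hsq_mem n).2
      have h3 : 0 < φ (Function.update Q i (W a b c (sq n))) i b :=
        hposafter (sq n) (hsq_mem n).1 (le_of_lt h1)
      have h5 := hno (sq n) t ⟨(hsqmem' n).1, (hsqmem' n).2⟩ ⟨ht0, ht1⟩ h1 h2 h3
      have h6 := hmono (hsqmem' n).1 (hsqmem' n).2 ht0 ht1 (le_of_lt h1)
      linarith
    have hconv := conv_entry hab hac hbc hC hQ i hζ0 hζ1 hsqmem' hsq_lim i b
    have : Tendsto (fun n => φ (Function.update Q i (W a b c (sq n))) i b) atTop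
        (𝓝 (φ (Function.update Q i (W a b c t)) i b)) := by
      rw [tendsto_congr hconst]
      exact tendsto_const_nhds
    have heq := tendsto_nhds_unique hconv this
    rw [hbζ] at heq
    have := hposafter t hζltt (le_refl t)
    linarith
  · -- b-entry positive at s
    by_cases hsτ : s = τ
    · -- find σ ∈ (s,t) with b-entry < b-entry at t
      by_contra hno
      push_neg at hno
      obtain ⟨sq, hsq_lim, hsq_mem⟩ := seq_down hst
      have hsqmem' : ∀ n, 0 < sq n ∧ sq n < 1 := fun n =>
        ⟨lt_trans hs0 (hsq_mem n).1, lt_trans (hsq_mem n).2 ht1⟩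
      have hconst : ∀ n, φ (Function.update Q i (W a b c (sq n))) i b
          = φ (Function.update Q i (W a b c t)) i b := by
        intro n
        have h2 : sq n ≠ τ := by
          rw [← hsτ]
          exact ne_of_gt (hsq_mem n).1
        have h3 : 0 < φ (Function.update Q i (W a b c (sq n))) i b :=
          lt_of_lt_of_le hbs0 (hmono hs0 hs1 (hsqmem' n).1 (hsqmem' n).2 (le_of_lt (hsq_mem n).1))
        have h5 := hno (sq n) t ⟨(hsqmem' n).1, (hsqmem' n).2⟩ ⟨ht0, ht1⟩ (hsq_mem n).2 h2 h3
        have h6 := hmono (hsqmem' n).1 (hsqmem' n).2 ht0 ht1 (le_of_lt (hsq_mem n).2)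
        linarith
      have hconv := conv_entry hab hac hbc hC hQ i hs0 hs1 hsqmem' hsq_lim i b
      have : Tendsto (fun n => φ (Function.update Q i (W a b c (sq n))) i b) atTop
          (𝓝 (φ (Function.update Q i (W a b c t)) i b)) := by
        rw [tendsto_congr hconst]
        exact tendsto_const_nhds
      have heq := tendsto_nhds_unique hconv this
      linarith
    · exact ⟨s, t, ⟨hs0, hs1⟩, ⟨ht0, ht1⟩, hst, hsτ, hbs0, hlt⟩


/-- Trade wrapper with explicit rates. -/
lemma tradeW (hab : a ≠ b) (hac : a ≠ c) (hbc : b ≠ c)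
    (hB : BistochasticValued φ) (hE : Efficient φ)
    {P : Fin 3 → Fin 3 → ℝ} (hP : NoTiesProfile P) {l h : Fin 3} (hlh : l ≠ h)
    {sl sh : ℝ} (hsl0 : 0 < sl) (hsl1 : sl < 1) (hsh0 : 0 < sh) (hsh1 : sh < 1)
    (hlth : sl < sh)
    (hPl : P l a > P l b ∧ P l b > P l c) (hPh : P h a > P h b ∧ P h b > P h c)
    (hmul : mu (P l) a b c = sl) (hmuh : mu (P h) a b c = sh)
    (hlb : 0 < φ P l b) (hha : 0 < φ P h a) (hhc : 0 < φ P h c) : False := by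
  refine trade hab hac hbc hB hE hP hlh hPl.1 hPl.2 hPh.1 hPh.2
    (x := (sl + sh)/2) (by linarith) (by linarith) ?_ ?_ hlb hha hhc
  · rw [hmul]; linarith
  · rw [hmuh]; linarith

/-- Case D of the non-constancy argument: the rise point `σ` lies above the other
agent's rate of middle substitution. -/
lemma caseD (hab : a ≠ b) (hac : a ≠ c) (hbc : b ≠ c)
    (hB : BistochasticValued φ) (hE : Efficient φ) (hSP : StrategyProof φ)
    (hNB : NonBossy φ) (hC : NCContinuous φ)
    {R : Fin 3 → Fin 3 → ℝ} (hR : NoTiesProfile R) {i o : Fin 3} (hio : i ≠ o)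
    {σ : ℝ} (hσ0 : 0 < σ) (hσ1 : σ < 1) (hRi : R i = W a b c σ)
    (hco1 : R o a > R o b) (hco2 : R o b > R o c)
    (hτσ : mu (R o) a b c < σ)
    (βpos : 0 < φ R i b) (hapos : 0 < φ R i a) (hcpos : 0 < φ R i c) : False := by
  obtain ⟨hτ0, hτ1⟩ := cone_mu_mem hco1 hco2
  have hiconeR : R i a > R i b ∧ R i b > R i c := by
    rw [hRi]; exact W_cone hab hac hbc hσ0 hσ1
  have hmuiR : mu (R i) a b c = σ := by rw [hRi]; exact W_mu hab hac hbc σ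
  -- helper facts about path profiles over the o-coordinate
  have hPntp : ∀ {t' : ℝ}, 0 < t' → t' < 1 →
      NoTiesProfile (Function.update R o (W a b c t')) :=
    fun ht0 ht1 => ntp_update hR (W_noTies hab hac hbc ht0 ht1)
  have hPi : ∀ t' : ℝ, (Function.update R o (W a b c t')) i = W a b c σ := by
    intro t'
    rw [Function.update_of_ne hio, hRi]
  have hPicone : ∀ t' : ℝ, (Function.update R o (W a b c t')) i a
      > (Function.update R o (W a b c t')) i b ∧
      (Function.update R o (W a b c t')) i b > (Function.update R o (W a b c t')) i c := by
    intro t'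
    rw [hPi t']
    exact W_cone hab hac hbc hσ0 hσ1
  have hPimu : ∀ t' : ℝ, mu ((Function.update R o (W a b c t')) i) a b c = σ := by
    intro t'
    rw [hPi t']
    exact W_mu hab hac hbc σ
  have hPocone : ∀ {t' : ℝ}, 0 < t' → t' < 1 →
      ((Function.update R o (W a b c t')) o a > (Function.update R o (W a b c t')) o b ∧
      (Function.update R o (W a b c t')) o b > (Function.update R o (W a b c t')) o c) := by
    intro t' ht0 ht1
    rw [Function.update_self]
    exact W_cone hab hac hbc ht0 ht1
  have hPomu : ∀ t' : ℝ, mu ((Function.update R o (W a b c t')) o) a b c = t' := by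
    intro t'
    rw [Function.update_self]
    exact W_mu hab hac hbc t'
  -- D1 : the other agent holds no b at R
  have hBj : φ R o b = 0 := by
    rcases eq_or_lt_of_le (entry_nonneg hB hR o b) with hh | hh
    · exact hh.symm
    · exfalso
      exact tradeW hab hac hbc hB hE hR (Ne.symm hio) hτ0 hτ1 hσ0 hσ1 hτσ
        ⟨hco1, hco2⟩ hiconeR rfl hmuiR hh hapos hcpos
  -- D2 : it holds both a and c
  obtain ⟨hAj, hCj⟩ := zpos hab hac hbc (hB R hR) hio hapos hcpos hBj
  -- anchor
  have hanchor : φ (Function.update R o (W a b c (mu (R o) a b c))) = φ R :=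
    anchorPath hab hac hbc hB hSP hNB hC hR o hco1 hco2
  have hboτ : φ (Function.update R o (W a b c (mu (R o) a b c))) o b = 0 := by
    rw [hanchor]; exact hBj
  -- the zero set along the o-path and its supremum T
  set zset := {t' : ℝ | (0 < t' ∧ t' < 1) ∧ φ (Function.update R o (W a b c t')) o b = 0}
    with hzs
  have hτmemz : mu (R o) a b c ∈ zset := ⟨⟨hτ0, hτ1⟩, hboτ⟩
  have hzne : zset.Nonempty := ⟨_, hτmemz⟩
  have hzbdd : BddAbove zset := ⟨1, fun z hz => le_of_lt hz.1.2⟩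
  have hτT : mu (R o) a b c ≤ sSup zset := le_csSup hzbdd hτmemz
  have hT1 : sSup zset ≤ 1 := csSup_le hzne (fun z hz => le_of_lt hz.1.2)
  have hT0 : 0 < sSup zset := lt_of_lt_of_le hτ0 hτT
  -- D4a : below T the b-entry of o vanishes
  have hD4a : ∀ t', 0 < t' → t' < sSup zset →
      φ (Function.update R o (W a b c t')) o b = 0 := by
    intro t' h0 hlt'
    obtain ⟨w, hw, hlw⟩ := exists_lt_of_lt_csSup hzne hlt'
    have hub : t' < 1 := lt_of_lt_of_le hlt' hT1
    have hmn := pathMono hab hac hbc hB hSP hR o h0 hub hw.1.1 hw.1.2 (le_of_lt hlw)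
    have hn := entry_nonneg hB (hPntp h0 hub) o b
    rw [hw.2] at hmn
    linarith
  -- D5 : T ≤ σ
  have hTσ : sSup zset ≤ σ := by
    by_contra hcon
    push_neg at hcon
    have h1 : σ < (σ + sSup zset)/2 := by linarith
    have h2 : (σ + sSup zset)/2 < sSup zset := by linarith
    have h3 : 0 < (σ + sSup zset)/2 := lt_trans hσ0 h1
    have h4 : (σ + sSup zset)/2 < 1 := lt_of_lt_of_le h2 hT1
    have h5 := hD4a _ h3 h2
    have h6 : φ (Function.update R o (W a b c ((σ + sSup zset)/2))) = φ R := by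
      have hmm := pathMatEq hab hac hbc hB hSP hNB hR o h3 h4 hτ0 hτ1 (by rw [h5, hboτ])
      exact hmm.trans hanchor
    refine tradeW hab hac hbc hB hE (hPntp h3 h4) hio hσ0 hσ1 h3 h4 h1
      (hPicone _) (hPocone h3 h4) (hPimu _) (hPomu _) ?_ ?_ ?_
    · rw [h6]; exact βpos
    · rw [h6]; exact hAj
    · rw [h6]; exact hCj
  -- D6 : above T the b-entry of o is positive
  have hD6 : ∀ t', sSup zset < t' → t' < 1 →
      0 < φ (Function.update R o (W a b c t')) o b := by
    intro t' h1 h2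
    have h0 : 0 < t' := lt_trans hT0 h1
    rcases eq_or_lt_of_le (entry_nonneg hB (hPntp h0 h2) o b) with hh | hh
    · exfalso
      have : t' ∈ zset := ⟨⟨h0, h2⟩, hh.symm⟩
      have := le_csSup hzbdd this
      linarith
    · exact hh
  -- D7 : the matrix at T is the matrix at R
  have hTlt1 : sSup zset < 1 := lt_of_le_of_lt hTσ hσ1
  have hYT : φ (Function.update R o (W a b c (sSup zset))) = φ R := by
    rcases eq_or_lt_of_le hτT with hh | hh
    · rw [← hh]; exact hanchor
    · have hboT : φ (Function.update R o (W a b c (sSup zset))) o b = 0 := by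
        obtain ⟨sq, hsq_lim, hsq_mem⟩ := seq_up hh
        have hmem' : ∀ n, 0 < sq n ∧ sq n < 1 := fun n =>
          ⟨lt_trans hτ0 (hsq_mem n).1, lt_trans (hsq_mem n).2 hTlt1⟩
        have hconv := conv_entry hab hac hbc hC hR o hT0 hTlt1 hmem' hsq_lim o b
        have hz : ∀ n, φ (Function.update R o (W a b c (sq n))) o b = 0 :=
          fun n => hD4a (sq n) (hmem' n).1 (hsq_mem n).2
        have h0' : Tendsto (fun n => φ (Function.update R o (W a b c (sq n))) o b)
            atTop (𝓝 0) := by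
          rw [tendsto_congr hz]
          exact tendsto_const_nhds
        exact tendsto_nhds_unique hconv h0'
      have hmm := pathMatEq hab hac hbc hB hSP hNB hR o hT0 hTlt1 hτ0 hτ1
        (by rw [hboT, hboτ])
      exact hmm.trans hanchor
  -- D8 / D9
  rcases eq_or_lt_of_le hTσ with hTeq | hTlt
  · -- T = σ
    by_cases hγ : ∀ ε : ℝ, 0 < ε → ∃ t', (σ < t' ∧ t' < σ + ε) ∧ t' < 1 ∧
        0 < φ (Function.update R o (W a b c t')) o a ∧
        0 < φ (Function.update R o (W a b c t')) o c
    · -- γ : a,c of o positive arbitrarily close above σ : then i's b must vanish there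
      have hγ' : ∀ n : ℕ, ∃ t', (σ < t' ∧ t' < σ + (1 - σ)/((n:ℝ)+2)) ∧ t' < 1 ∧
          0 < φ (Function.update R o (W a b c t')) o a ∧
          0 < φ (Function.update R o (W a b c t')) o c := by
        intro n
        apply hγ
        have : (0:ℝ) < (n:ℝ)+2 := by positivity
        exact div_pos (by linarith) this
      choose f hf using hγ'
      have hf0 : ∀ n, 0 < f n := fun n => lt_trans hσ0 (hf n).1.1
      have hf1 : ∀ n, f n < 1 := fun n => (hf n).2.1
      have hflim : Tendsto f atTop (𝓝 σ) := by
        have hlow : ∀ n, σ ≤ f n := fun n => le_of_lt (hf n).1.1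
        have hup : ∀ n, f n ≤ σ + (1 - σ)/((n:ℝ)+2) := fun n => le_of_lt (hf n).1.2
        exact tendsto_of_tendsto_of_tendsto_of_le_of_le tendsto_const_nhds
          (seq_aux σ (1 - σ)) hlow hup
      have hbiz : ∀ n, φ (Function.update R o (W a b c (f n))) i b = 0 := by
        intro n
        rcases eq_or_lt_of_le (entry_nonneg hB (hPntp (hf0 n) (hf1 n)) i b) with hh | hh
        · exact hh.symm
        · exfalso
          exact tradeW hab hac hbc hB hE (hPntp (hf0 n) (hf1 n)) hio hσ0 hσ1 (hf0 n)
            (hf1 n) (hf n).1.1 (hPicone _) (hPocone (hf0 n) (hf1 n)) (hPimu _) (hPomu _)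
            hh (hf n).2.2.1 (hf n).2.2.2
      have hconv := conv_entry hab hac hbc hC hR o hσ0 hσ1
        (fun n => ⟨hf0 n, hf1 n⟩) hflim i b
      have h0' : Tendsto (fun n => φ (Function.update R o (W a b c (f n))) i b)
          atTop (𝓝 0) := by
        rw [tendsto_congr hbiz]
        exact tendsto_const_nhds
      have := tendsto_nhds_unique hconv h0'
      rw [hTeq] at hYT
      rw [hYT] at this
      linarith
    · -- δ : no such points; then o's b-entry is constant just above σ, contradicting
      -- continuity at σ where it vanishes
      push_neg at hγ
      obtain ⟨ε0, hε0, hδ⟩ := hγ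
      have ht₁mem : σ < σ + min ε0 (1 - σ)/2 ∧ σ + min ε0 (1 - σ)/2 < σ + ε0 ∧
          σ + min ε0 (1 - σ)/2 < 1 := by
        have h1 : (0:ℝ) < min ε0 (1 - σ) := lt_min hε0 (by linarith)
        have h2 : min ε0 (1 - σ) ≤ ε0 := min_le_left _ _
        have h3 : min ε0 (1 - σ) ≤ 1 - σ := min_le_right _ _
        refine ⟨by linarith, by linarith, by linarith⟩
      have hconstwin : ∀ t', σ < t' → t' < σ + ε0 → t' < 1 → ∀ t'', t' < t'' → t'' < 1 →
          φ (Function.update R o (W a b c t'')) o b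
            = φ (Function.update R o (W a b c t')) o b := by
        intro t' h1 h2 h3 t'' h4 h5
        have h0' : 0 < t' := lt_trans hσ0 h1
        have hmn := pathMono hab hac hbc hB hSP hR o h0' h3 (lt_trans h0' h4) h5 (le_of_lt h4)
        rcases eq_or_lt_of_le hmn with hh | hh
        · exact hh.symm
        · exfalso
          obtain ⟨hpa, hpc⟩ := pathPos hab hac hbc hB hSP hR o h0' h3 (lt_trans h0' h4) h5 hh
          exact absurd hpc (not_lt.mpr (hδ t' ⟨h1, h2⟩ h3 hpa))
      -- the constant positive value
      have hVpos : 0 < φ (Function.update R o (W a b c (σ + min ε0 (1 - σ)/2))) o b := by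
        apply hD6
        · rw [hTeq]; exact ht₁mem.1
        · exact ht₁mem.2.2
      obtain ⟨sq, hsq_lim, hsq_mem⟩ := seq_down ht₁mem.1
      have hmem' : ∀ n, 0 < sq n ∧ sq n < 1 := fun n =>
        ⟨lt_trans hσ0 (hsq_mem n).1, lt_trans (hsq_mem n).2 ht₁mem.2.2⟩
      have hcv : ∀ n, φ (Function.update R o (W a b c (sq n))) o b
          = φ (Function.update R o (W a b c (σ + min ε0 (1 - σ)/2))) o b := by
        intro n
        exact (hconstwin (sq n) (hsq_mem n).1
          (lt_trans (hsq_mem n).2 ht₁mem.2.1) (hmem' n).2 _ (hsq_mem n).2 ht₁mem.2.2).symm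
      have hconv := conv_entry hab hac hbc hC hR o hσ0 hσ1 hmem' hsq_lim o b
      have h0' : Tendsto (fun n => φ (Function.update R o (W a b c (sq n))) o b)
          atTop (𝓝 (φ (Function.update R o (W a b c (σ + min ε0 (1 - σ)/2))) o b)) := by
        rw [tendsto_congr hcv]
        exact tendsto_const_nhds
      have heq := tendsto_nhds_unique hconv h0'
      rw [hTeq] at hYT
      rw [hYT] at heq
      rw [hBj] at heq
      linarith
  · -- T < σ : approach T from above, i keeps a and c, o has b : trade
    obtain ⟨sq, hsq_lim, hsq_mem⟩ := seq_down hTlt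
    have hmem' : ∀ n, 0 < sq n ∧ sq n < 1 := fun n =>
      ⟨lt_trans hT0 (hsq_mem n).1, lt_trans (hsq_mem n).2 hσ1⟩
    have hconva := conv_entry hab hac hbc hC hR o hT0 hTlt1 hmem' hsq_lim i a
    have hconvc := conv_entry hab hac hbc hC hR o hT0 hTlt1 hmem' hsq_lim i c
    rw [hYT] at hconva hconvc
    have hea : ∀ᶠ n in atTop, 0 < φ (Function.update R o (W a b c (sq n))) i a :=
      hconva.eventually (eventually_gt_nhds hapos)
    have hec : ∀ᶠ n in atTop, 0 < φ (Function.update R o (W a b c (sq n))) i c :=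
      hconvc.eventually (eventually_gt_nhds hcpos)
    obtain ⟨n, hna, hnc⟩ := (hea.and hec).exists
    exact tradeW hab hac hbc hB hE (hPntp (hmem' n).1 (hmem' n).2) (Ne.symm hio)
      (hmem' n).1 (hmem' n).2 hσ0 hσ1 (hsq_mem n).2
      (hPocone (hmem' n).1 (hmem' n).2) (hPicone _) (hPomu _) (hPimu _)
      (hD6 (sq n) (hsq_mem n).1 (hmem' n).2) hna hnc


/-- Case E of the non-constancy argument: the rise point `σ` lies below the other
agent's rate of middle substitution. -/
lemma caseE (hab : a ≠ b) (hac : a ≠ c) (hbc : b ≠ c)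
    (hB : BistochasticValued φ) (hE : Efficient φ) (hSP : StrategyProof φ)
    (hNB : NonBossy φ) (hC : NCContinuous φ)
    {R : Fin 3 → Fin 3 → ℝ} (hR : NoTiesProfile R) {i o : Fin 3} (hio : i ≠ o)
    {σ : ℝ} (hσ0 : 0 < σ) (hσ1 : σ < 1) (hRi : R i = W a b c σ)
    (hco1 : R o a > R o b) (hco2 : R o b > R o c)
    (hστ : σ < mu (R o) a b c)
    (βpos : 0 < φ R i b) (hapos : 0 < φ R i a) (hcpos : 0 < φ R i c) : False := by
  obtain ⟨hτ0, hτ1⟩ := cone_mu_mem hco1 hco2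
  have hiconeR : R i a > R i b ∧ R i b > R i c := by
    rw [hRi]; exact W_cone hab hac hbc hσ0 hσ1
  have hmuiR : mu (R i) a b c = σ := by rw [hRi]; exact W_mu hab hac hbc σ
  have hPntp : ∀ {t' : ℝ}, 0 < t' → t' < 1 →
      NoTiesProfile (Function.update R o (W a b c t')) :=
    fun ht0 ht1 => ntp_update hR (W_noTies hab hac hbc ht0 ht1)
  have hPi : ∀ t' : ℝ, (Function.update R o (W a b c t')) i = W a b c σ := by
    intro t'
    rw [Function.update_of_ne hio, hRi]
  have hPicone : ∀ t' : ℝ, (Function.update R o (W a b c t')) i a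
      > (Function.update R o (W a b c t')) i b ∧
      (Function.update R o (W a b c t')) i b > (Function.update R o (W a b c t')) i c := by
    intro t'
    rw [hPi t']
    exact W_cone hab hac hbc hσ0 hσ1
  have hPimu : ∀ t' : ℝ, mu ((Function.update R o (W a b c t')) i) a b c = σ := by
    intro t'
    rw [hPi t']
    exact W_mu hab hac hbc σ
  have hPocone : ∀ {t' : ℝ}, 0 < t' → t' < 1 →
      ((Function.update R o (W a b c t')) o a > (Function.update R o (W a b c t')) o b ∧
      (Function.update R o (W a b c t')) o b > (Function.update R o (W a b c t')) o c) := by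
    intro t' ht0 ht1
    rw [Function.update_self]
    exact W_cone hab hac hbc ht0 ht1
  have hPomu : ∀ t' : ℝ, mu ((Function.update R o (W a b c t')) o) a b c = t' := by
    intro t'
    rw [Function.update_self]
    exact W_mu hab hac hbc t'
  -- E1 : o cannot hold both a and c
  have hnoAC : ¬ (0 < φ R o a ∧ 0 < φ R o c) := by
    rintro ⟨h1, h2⟩
    exact tradeW hab hac hbc hB hE hR hio hσ0 hσ1 hτ0 hτ1 hστ
      hiconeR ⟨hco1, hco2⟩ hmuiR rfl βpos h1 h2
  -- E2 : hence o holds some b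
  have hBj : 0 < φ R o b := by
    rcases eq_or_lt_of_le (entry_nonneg hB hR o b) with hh | hh
    · exact absurd (zpos hab hac hbc (hB R hR) hio hapos hcpos hh.symm) hnoAC
    · exact hh
  -- anchor
  have hanchor : φ (Function.update R o (W a b c (mu (R o) a b c))) = φ R :=
    anchorPath hab hac hbc hB hSP hNB hC hR o hco1 hco2
  have hboτ : φ (Function.update R o (W a b c (mu (R o) a b c))) o b = φ R o b := by
    rw [hanchor]
  -- the level set along the o-path and its infimum T'
  set lset := {t' : ℝ | (0 < t' ∧ t' < 1) ∧
    φ (Function.update R o (W a b c t')) o b = φ R o b} with hls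
  have hτmeml : mu (R o) a b c ∈ lset := ⟨⟨hτ0, hτ1⟩, hboτ⟩
  have hlne : lset.Nonempty := ⟨_, hτmeml⟩
  have hlbdd : BddBelow lset := ⟨0, fun z hz => le_of_lt hz.1.1⟩
  have hT'τ : sInf lset ≤ mu (R o) a b c := csInf_le hlbdd hτmeml
  have hT'0 : 0 ≤ sInf lset := le_csInf hlne (fun z hz => le_of_lt hz.1.1)
  have hT'1 : sInf lset < 1 := lt_of_le_of_lt hT'τ hτ1
  -- E5a : between T' and τ the b-entry of o is constant = value at R
  have hE5a : ∀ t', 0 < t' → sInf lset < t' → t' ≤ mu (R o) a b c →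
      φ (Function.update R o (W a b c t')) o b = φ R o b := by
    intro t' h0 h1 h2
    obtain ⟨w, hw, hlw⟩ := exists_lt_of_csInf_lt hlne h1
    have ht1 : t' < 1 := lt_of_le_of_lt h2 hτ1
    have hm1 := pathMono hab hac hbc hB hSP hR o hw.1.1 hw.1.2 h0 ht1 (le_of_lt hlw)
    have hm2 := pathMono hab hac hbc hB hSP hR o h0 ht1 hτ0 hτ1 h2
    rw [hw.2] at hm1
    rw [hboτ] at hm2
    linarith
  -- E6 : σ ≤ T'
  have hσT' : σ ≤ sInf lset := by
    by_contra hcon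
    push_neg at hcon
    have h1 : sInf lset < (sInf lset + σ)/2 := by linarith
    have h2 : (sInf lset + σ)/2 < σ := by linarith
    have h3 : 0 < (sInf lset + σ)/2 := by linarith
    have h4 : (sInf lset + σ)/2 < 1 := lt_trans h2 hσ1
    have h5 := hE5a _ h3 h1 (le_of_lt (lt_trans h2 hστ))
    have h6 : φ (Function.update R o (W a b c ((sInf lset + σ)/2))) = φ R := by
      have hmm := pathMatEq hab hac hbc hB hSP hNB hR o h3 h4 hτ0 hτ1 (by rw [h5, hboτ])
      exact hmm.trans hanchor
    refine tradeW hab hac hbc hB hE (hPntp h3 h4) (Ne.symm hio) h3 h4 hσ0 hσ1 h2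
      (hPocone h3 h4) (hPicone _) (hPomu _) (hPimu _) ?_ ?_ ?_
    · rw [h6]; exact hBj
    · rw [h6]; exact hapos
    · rw [h6]; exact hcpos
  have hT'0' : 0 < sInf lset := lt_of_lt_of_le hσ0 hσT'
  -- E7 : the matrix at T' is the matrix at R
  have hYT' : φ (Function.update R o (W a b c (sInf lset))) = φ R := by
    rcases eq_or_lt_of_le hT'τ with hh | hh
    · rw [hh]; exact hanchor
    · have hboT' : φ (Function.update R o (W a b c (sInf lset))) o b = φ R o b := by
        obtain ⟨sq, hsq_lim, hsq_mem⟩ := seq_down hh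
        have hmem' : ∀ n, 0 < sq n ∧ sq n < 1 := fun n =>
          ⟨lt_trans hT'0' (hsq_mem n).1, lt_trans (hsq_mem n).2 hτ1⟩
        have hconv := conv_entry hab hac hbc hC hR o hT'0' hT'1 hmem' hsq_lim o b
        have hz : ∀ n, φ (Function.update R o (W a b c (sq n))) o b = φ R o b :=
          fun n => hE5a (sq n) (hmem' n).1 (hsq_mem n).1 (le_of_lt (hsq_mem n).2)
        have h0' : Tendsto (fun n => φ (Function.update R o (W a b c (sq n))) o b)
            atTop (𝓝 (φ R o b)) := by
          rw [tendsto_congr hz]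
          exact tendsto_const_nhds
        exact tendsto_nhds_unique hconv h0'
      have hmm := pathMatEq hab hac hbc hB hSP hNB hR o hT'0' hT'1 hτ0 hτ1
        (by rw [hboT', hboτ])
      exact hmm.trans hanchor
  -- E8
  rcases eq_or_lt_of_le hσT' with hTeq | hTlt
  · -- σ = T' : approach σ from below, o keeps b, i keeps a and c : trade
    obtain ⟨sq, hsq_lim, hsq_mem⟩ := seq_up hσ0
    have hmem' : ∀ n, 0 < sq n ∧ sq n < 1 := fun n =>
      ⟨(hsq_mem n).1, lt_trans (hsq_mem n).2 hσ1⟩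
    have hconva := conv_entry hab hac hbc hC hR o hσ0 hσ1 hmem' hsq_lim i a
    have hconvc := conv_entry hab hac hbc hC hR o hσ0 hσ1 hmem' hsq_lim i c
    have hconvb := conv_entry hab hac hbc hC hR o hσ0 hσ1 hmem' hsq_lim o b
    rw [show σ = sInf lset from hTeq] at hconva hconvc hconvb
    rw [hYT'] at hconva hconvc hconvb
    have hea : ∀ᶠ n in atTop, 0 < φ (Function.update R o (W a b c (sq n))) i a :=
      hconva.eventually (eventually_gt_nhds hapos)
    have hec : ∀ᶠ n in atTop, 0 < φ (Function.update R o (W a b c (sq n))) i c :=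
      hconvc.eventually (eventually_gt_nhds hcpos)
    have heb : ∀ᶠ n in atTop, 0 < φ (Function.update R o (W a b c (sq n))) o b :=
      hconvb.eventually (eventually_gt_nhds hBj)
    obtain ⟨n, ⟨hna, hnc⟩, hnb⟩ := ((hea.and hec).and heb).exists
    exact tradeW hab hac hbc hB hE (hPntp (hmem' n).1 (hmem' n).2) (Ne.symm hio)
      (hmem' n).1 (hmem' n).2 hσ0 hσ1 (hsq_mem n).2
      (hPocone (hmem' n).1 (hmem' n).2) (hPicone _) (hPomu _) (hPimu _)
      hnb hna hnc
  · -- σ < T' : approach T' from below; there o's b-entry rises to its value at T',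
    -- so o holds a and c, and efficiency forces i's b-entry to vanish; contradiction
    -- with continuity at T'.
    obtain ⟨sq, hsq_lim, hsq_mem⟩ := seq_up hTlt
    have hmem' : ∀ n, 0 < sq n ∧ sq n < 1 := fun n =>
      ⟨lt_trans hσ0 (hsq_mem n).1, lt_trans (hsq_mem n).2 hT'1⟩
    have hboT' : φ (Function.update R o (W a b c (sInf lset))) o b = φ R o b := by
      rw [hYT']
    have hblt : ∀ n, φ (Function.update R o (W a b c (sq n))) o b
        < φ (Function.update R o (W a b c (sInf lset))) o b := by
      intro n
      have hne : φ (Function.update R o (W a b c (sq n))) o b ≠ φ R o b := by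
        intro hcontra
        have : sq n ∈ lset := ⟨⟨(hmem' n).1, (hmem' n).2⟩, hcontra⟩
        have := csInf_le hlbdd this
        linarith [(hsq_mem n).2]
      have hle := pathMono hab hac hbc hB hSP hR o (hmem' n).1 (hmem' n).2 hτ0 hτ1
        (le_of_lt (lt_of_lt_of_le (hsq_mem n).2 hT'τ))
      rw [hboτ] at hle
      rw [hboT']
      exact lt_of_le_of_ne hle hne
    have hbiz : ∀ n, φ (Function.update R o (W a b c (sq n))) i b = 0 := by
      intro n
      obtain ⟨hoa, hoc⟩ := pathPos hab hac hbc hB hSP hR o (hmem' n).1 (hmem' n).2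
        hT'0' hT'1 (hblt n)
      rcases eq_or_lt_of_le (entry_nonneg hB (hPntp (hmem' n).1 (hmem' n).2) i b) with hh | hh
      · exact hh.symm
      · exfalso
        exact tradeW hab hac hbc hB hE (hPntp (hmem' n).1 (hmem' n).2) hio hσ0 hσ1
          (hmem' n).1 (hmem' n).2 (hsq_mem n).1 (hPicone _)
          (hPocone (hmem' n).1 (hmem' n).2) (hPimu _) (hPomu _) hh hoa hoc
    have hconv := conv_entry hab hac hbc hC hR o hT'0' hT'1 hmem' hsq_lim i b
    have h0' : Tendsto (fun n => φ (Function.update R o (W a b c (sq n))) i b)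
        atTop (𝓝 0) := by
      rw [tendsto_congr hbiz]
      exact tendsto_const_nhds
    have heq := tendsto_nhds_unique hconv h0'
    rw [hYT'] at heq
    linarith


/-- The b-entry of the varied agent's row is constant along the path, provided some other
agent has the cone order a ≻ b ≻ c. -/
lemma nc (hab : a ≠ b) (hac : a ≠ c) (hbc : b ≠ c)
    (hB : BistochasticValued φ) (hE : Efficient φ) (hSP : StrategyProof φ)
    (hNB : NonBossy φ) (hC : NCContinuous φ)
    {Q : Fin 3 → Fin 3 → ℝ} (hQ : NoTiesProfile Q) {i o : Fin 3} (hio : i ≠ o)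
    (hco1 : Q o a > Q o b) (hco2 : Q o b > Q o c)
    {s t : ℝ} (hs0 : 0 < s) (hs1 : s < 1) (ht0 : 0 < t) (ht1 : t < 1) :
    φ (Function.update Q i (W a b c s)) i b = φ (Function.update Q i (W a b c t)) i b := by
  suffices hkey : ∀ s' t', 0 < s' → s' < 1 → 0 < t' → t' < 1 → s' < t' →
      ¬(φ (Function.update Q i (W a b c s')) i b
        < φ (Function.update Q i (W a b c t')) i b) by
    rcases lt_trichotomy s t with h | h | h
    · exact le_antisymm (pathMono hab hac hbc hB hSP hQ i hs0 hs1 ht0 ht1 (le_of_lt h))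
        (not_lt.mp (hkey s t hs0 hs1 ht0 ht1 h))
    · rw [h]
    · exact (le_antisymm (pathMono hab hac hbc hB hSP hQ i ht0 ht1 hs0 hs1 (le_of_lt h))
        (not_lt.mp (hkey t s ht0 ht1 hs0 hs1 h))).symm
  intro s' t' hs'0 hs'1 ht'0 ht'1 hst hlt
  obtain ⟨σ, σ'', ⟨hσ0, hσ1⟩, ⟨hσ''0, hσ''1⟩, hσσ'', hστ, hbσ, hrise⟩ :=
    stepA hab hac hbc hB hSP hC hQ i (τ := mu (Q o) a b c) hs'0 hs'1 ht'0 ht'1 hst hlt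
  obtain ⟨hapos, hcpos⟩ := pathPos hab hac hbc hB hSP hQ i hσ0 hσ1 hσ''0 hσ''1 hrise
  have hR : NoTiesProfile (Function.update Q i (W a b c σ)) :=
    ntp_update hQ (W_noTies hab hac hbc hσ0 hσ1)
  have hRo : (Function.update Q i (W a b c σ)) o = Q o :=
    Function.update_of_ne (Ne.symm hio) _ _
  have hRi : (Function.update Q i (W a b c σ)) i = W a b c σ := Function.update_self _ _ _
  have hco1' : (Function.update Q i (W a b c σ)) o a
      > (Function.update Q i (W a b c σ)) o b := by rw [hRo]; exact hco1
  have hco2' : (Function.update Q i (W a b c σ)) o b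
      > (Function.update Q i (W a b c σ)) o c := by rw [hRo]; exact hco2
  rcases lt_trichotomy (mu ((Function.update Q i (W a b c σ)) o) a b c) σ
    with hcase | hcase | hcase
  · exact caseD hab hac hbc hB hE hSP hNB hC hR hio hσ0 hσ1 hRi hco1' hco2' hcase
      hbσ hapos hcpos
  · rw [hRo] at hcase
    exact hστ hcase.symm
  · exact caseE hab hac hbc hB hE hSP hNB hC hR hio hσ0 hσ1 hRi hco1' hco2' hcase
      hbσ hapos hcpos

/-- Invariance: replacing agent `i`'s cone utility by any other cone utility leaves the
whole allocation matrix unchanged, provided another agent `o` also has the cone order. -/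
lemma inv (hab : a ≠ b) (hac : a ≠ c) (hbc : b ≠ c)
    (hB : BistochasticValued φ) (hE : Efficient φ) (hSP : StrategyProof φ)
    (hNB : NonBossy φ) (hC : NCContinuous φ)
    {Q : Fin 3 → Fin 3 → ℝ} (hQ : NoTiesProfile Q) {i o : Fin 3} (hio : i ≠ o)
    (hci1 : Q i a > Q i b) (hci2 : Q i b > Q i c)
    (hco1 : Q o a > Q o b) (hco2 : Q o b > Q o c)
    {v : Fin 3 → ℝ} (hv : NoTies v) (hcv1 : v a > v b) (hcv2 : v b > v c) :
    φ (Function.update Q i v) = φ Q := by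
  have hμv := cone_mu_mem hcv1 hcv2
  have hμi := cone_mu_mem hci1 hci2
  have h1 : φ (Function.update Q i (W a b c (mu (Q i) a b c))) = φ Q :=
    anchorPath hab hac hbc hB hSP hNB hC hQ i hci1 hci2
  have hQ' : NoTiesProfile (Function.update Q i v) := ntp_update hQ hv
  have hQ'i : (Function.update Q i v) i = v := Function.update_self _ _ _
  have h2 := anchorPath hab hac hbc hB hSP hNB hC hQ' i
    (by rw [Function.update_self]; exact hcv1) (by rw [Function.update_self]; exact hcv2)
  rw [Function.update_idem, hQ'i] at h2
  have h3 : φ (Function.update Q i (W a b c (mu v a b c)))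
      = φ (Function.update Q i (W a b c (mu (Q i) a b c))) :=
    pathMatEq hab hac hbc hB hSP hNB hQ i hμv.1 hμv.2 hμi.1 hμi.2
      (nc hab hac hbc hB hE hSP hNB hC hQ hio hco1 hco2 hμv.1 hμv.2 hμi.1 hμi.2)
  exact h2.symm.trans (h3.trans h1)

end Rule

end Stmt9

theorem stmt9 (φ : (Fin 3 → Fin 3 → ℝ) → Fin 3 → Fin 3 → ℝ)
    (hB : BistochasticValued φ) (hE : Efficient φ) (hSP : StrategyProof φ)
    (hNB : NonBossy φ) (hC : NCContinuous φ)
    (u : Fin 3 → Fin 3 → ℝ) (hu : NoTiesProfile u)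
    (i j : Fin 3) (hij : i ≠ j) (hord : SameOrder (u i) (u j))
    (a b c : Fin 3) (hab : a ≠ b) (hac : a ≠ c) (hbc : b ≠ c)
    (h1 : u i a > u i b) (h2 : u i b > u i c)
    (hpos : φ u i b + φ u j b > 0)
    (ui' uj' : Fin 3 → ℝ) (hui' : NoTies ui') (huj' : NoTies uj')
    (hsi : SameOrder ui' (u i)) (hsj : SameOrder uj' (u i)) :
    φ (Function.update (Function.update u i ui') j uj') = φ u := by
  have hco1 : u j a > u j b := (hord a b).mp h1
  have hco2 : u j b > u j c := (hord b c).mp h2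
  have hui1 : ui' a > ui' b := (hsi a b).mpr h1
  have hui2 : ui' b > ui' c := (hsi b c).mpr h2
  have huj1 : uj' a > uj' b := (hsj a b).mpr h1
  have huj2 : uj' b > uj' c := (hsj b c).mpr h2
  have s1 : φ (Function.update u i ui') = φ u :=
    Stmt9.inv hab hac hbc hB hE hSP hNB hC hu hij h1 h2 hco1 hco2 hui' hui1 hui2
  have hu1 : NoTiesProfile (Function.update u i ui') := Stmt9.ntp_update hu hui'
  have e1 : (Function.update u i ui') j = u j := Function.update_of_ne (Ne.symm hij) _ _
  have e2 : (Function.update u i ui') i = ui' := Function.update_self _ _ _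
  have s2 : φ (Function.update (Function.update u i ui') j uj')
      = φ (Function.update u i ui') :=
    Stmt9.inv hab hac hbc hB hE hSP hNB hC hu1 (Ne.symm hij)
      (by rw [e1]; exact hco1) (by rw [e1]; exact hco2)
      (by rw [e2]; exact hui1) (by rw [e2]; exact hui2) huj' huj1 huj2
  rw [s2, s1]
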